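/- Let e ≥ p ≥ 0 be integers. Then in the polynomial ring ℝ[x₁, …, x_e, t] one has the identity c_p(x₁ + t, …, x_e + t) = Σ_{i=0}^{p} C(e − p + i, i) · c_{p−i}(x₁, …, x_e) · tⁱ, where c_k denotes the k-th elementary symmetric polynomial in e variables and C(·,·) denotes the binomial coefficient. Equivalently, the i-th derived Schur polynomial of the partition λ = (p) in e variables is s_{(p)}^{(i)} = C(e − p + i, i) · c_{p−i}. -/

import Mathlib

open MvPolynomial Finset

/-- `c_k` for `k ∈ ℤ`: the `k`-th elementary symmetric polynomial in `e` variables,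
with the convention `c_k = 0` for `k < 0` (and automatically `c_k = 0` for `k > e`). -/
noncomputable def esymmZ (e : ℕ) (k : ℤ) : MvPolynomial (Fin e) ℝ :=
  if k < 0 then 0 else esymm (Fin e) ℝ k.toNat

/-- The Schur polynomial `s_λ = det (c_{λᵢ - i + j})` in `e` variables, for a partition
given as `lam : Fin N → ℕ` (here `i, j` are `0`-based). -/
noncomputable def schur (e N : ℕ) (lam : Fin N → ℕ) : MvPolynomial (Fin e) ℝ :=
  Matrix.det (Matrix.of fun i j : Fin N => esymmZ e ((lam i : ℤ) - (i : ℤ) + (j : ℤ)))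

/-- `s_λ(x₁ + t, …, x_e + t)`, as a polynomial in `t` with coefficients in
`ℝ[x₁, …, x_e]`. -/
noncomputable def schurShift (e N : ℕ) (lam : Fin N → ℕ) :
    Polynomial (MvPolynomial (Fin e) ℝ) :=
  MvPolynomial.aeval (fun k : Fin e => Polynomial.C (MvPolynomial.X k) + Polynomial.X)
    (schur e N lam)

/-- The `i`-th derived Schur polynomial `s_λ^{(i)}` in `e` variables: the coefficient
of `tⁱ` in `s_λ(x₁ + t, …, x_e + t)`. -/
noncomputable def derivedSchur (e N : ℕ) (lam : Fin N → ℕ) (i : ℕ) :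
    MvPolynomial (Fin e) ℝ :=
  (schurShift e N lam).coeff i


lemma card_supersets {α : Type*} [DecidableEq α] (w u : Finset α) (hu : u ⊆ w) (p : ℕ)
    (hup : u.card ≤ p) :
    ((powersetCard p w).filter (fun s => u ⊆ s)).card
      = (w.card - u.card).choose (p - u.card) := by
  rw [← Finset.card_sdiff_of_subset hu, ← Finset.card_powersetCard (p - u.card) (w \ u)]
  refine Finset.card_nbij' (fun s => s \ u) (fun v => v ∪ u) ?_ ?_ ?_ ?_
  · intro s hs
    simp only [Finset.mem_coe, mem_filter, mem_powersetCard] at hs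
    obtain ⟨⟨hsw, hsc⟩, hus⟩ := hs
    simp only [Finset.mem_coe, mem_powersetCard]
    exact ⟨Finset.sdiff_subset_sdiff hsw (le_refl u), by rw [Finset.card_sdiff_of_subset hus, hsc]⟩
  · intro v hv
    simp only [Finset.mem_coe, mem_powersetCard] at hv
    obtain ⟨hvw, hvc⟩ := hv
    have hdisj : Disjoint v u := Finset.disjoint_of_subset_left hvw (Finset.sdiff_disjoint)
    simp only [Finset.mem_coe, mem_filter, mem_powersetCard]
    refine ⟨⟨Finset.union_subset (hvw.trans (Finset.sdiff_subset)) hu, ?_⟩, Finset.subset_union_right⟩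
    rw [Finset.card_union_of_disjoint hdisj, hvc]
    omega
  · intro s hs
    simp only [Finset.mem_coe, mem_filter] at hs
    exact Finset.sdiff_union_of_subset hs.2
  · intro v hv
    simp only [Finset.mem_coe, mem_powersetCard] at hv
    have hdisj : Disjoint v u := Finset.disjoint_of_subset_left hv.1 (Finset.sdiff_disjoint)
    simp only []
    rw [Finset.union_sdiff_right, Finset.sdiff_eq_self_of_disjoint hdisj]

lemma esymm_shift (e p : ℕ) (hpe : p ≤ e) :
    MvPolynomial.aeval (fun k : Fin e => Polynomial.C (MvPolynomial.X k) + Polynomial.X)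
        (esymm (Fin e) ℝ p) =
      ∑ i ∈ Finset.range (p + 1),
        Polynomial.C ((((e - p + i).choose i : ℕ) : MvPolynomial (Fin e) ℝ) *
            esymm (Fin e) ℝ (p - i)) * Polynomial.X ^ i := by
  classical
  set f : Fin e → Polynomial (MvPolynomial (Fin e) ℝ) :=
    fun k => Polynomial.C (MvPolynomial.X k) + Polynomial.X with hf
  set F : Finset (Fin e) → Polynomial (MvPolynomial (Fin e) ℝ) :=
    fun u => Polynomial.C (∏ k ∈ u, MvPolynomial.X k) * Polynomial.X ^ (p - u.card) with hF
  have hstep : (aeval f) (esymm (Fin e) ℝ p)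
      = ∑ s ∈ powersetCard p (univ : Finset (Fin e)), ∑ u ∈ s.powerset, F u := by
    rw [esymm, map_sum]
    refine Finset.sum_congr rfl fun s hs => ?_
    rw [map_prod]
    simp only [aeval_X, hf]
    rw [Finset.prod_add]
    refine Finset.sum_congr rfl fun u hu => ?_
    simp only [hF]
    rw [Finset.prod_const,
      ← map_prod (Polynomial.C : MvPolynomial (Fin e) ℝ →+* Polynomial (MvPolynomial (Fin e) ℝ))
        (fun k => MvPolynomial.X k) u,
      Finset.card_sdiff_of_subset (Finset.mem_powerset.mp hu), (Finset.mem_powersetCard.mp hs).2]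
  rw [hstep]
  rw [Finset.sum_comm'
    (s' := fun u => (powersetCard p (univ : Finset (Fin e))).filter (fun s => u ⊆ s))
    (t' := (univ : Finset (Fin e)).powerset)
    (by
      intro s u
      simp only [mem_filter, Finset.mem_powerset]
      constructor
      · rintro ⟨h1, h2⟩; exact ⟨⟨h1, h2⟩, Finset.subset_univ u⟩
      · rintro ⟨⟨h1, h2⟩, _⟩; exact ⟨h1, h2⟩)]
  simp only [Finset.sum_const]
  rw [Finset.sum_powerset]
  have hcard : #(univ : Finset (Fin e)) = e := by simp
  rw [hcard]
  have hvanish : ∀ j ∈ Finset.range (e + 1), j ∉ Finset.range (p + 1) →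
      (∑ u ∈ powersetCard j (univ : Finset (Fin e)),
        #((powersetCard p (univ : Finset (Fin e))).filter (fun s => u ⊆ s)) • F u) = 0 := by
    intro j _ hj
    simp only [Finset.mem_range, not_lt] at hj
    refine Finset.sum_eq_zero fun u hu => ?_
    have hcu : #u = j := (Finset.mem_powersetCard.mp hu).2
    have : (powersetCard p (univ : Finset (Fin e))).filter (fun s => u ⊆ s) = ∅ := by
      refine Finset.filter_eq_empty_iff.mpr fun s hs hus => ?_
      have := Finset.card_le_card hus
      rw [hcu, (Finset.mem_powersetCard.mp hs).2] at this
      omega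
    rw [this]
    simp
  rw [← Finset.sum_subset (Finset.range_subset_range.mpr (by omega)) hvanish]
  have hinner : ∀ j ∈ Finset.range (p + 1),
      (∑ u ∈ powersetCard j (univ : Finset (Fin e)),
        #((powersetCard p (univ : Finset (Fin e))).filter (fun s => u ⊆ s)) • F u)
      = Polynomial.C ((((e - j).choose (p - j) : ℕ) : MvPolynomial (Fin e) ℝ) *
            esymm (Fin e) ℝ j) * Polynomial.X ^ (p - j) := by
    intro j hj
    simp only [Finset.mem_range] at hj
    have hjp : j ≤ p := by omega
    have : ∀ u ∈ powersetCard j (univ : Finset (Fin e)),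
        #((powersetCard p (univ : Finset (Fin e))).filter (fun s => u ⊆ s)) • F u
        = Polynomial.C ((((e - j).choose (p - j) : ℕ) : MvPolynomial (Fin e) ℝ) *
            ∏ k ∈ u, MvPolynomial.X k) * Polynomial.X ^ (p - j) := by
      intro u hu
      obtain ⟨_, hcu⟩ := Finset.mem_powersetCard.mp hu
      rw [card_supersets _ _ (Finset.subset_univ u) p (by omega), hcard, hcu, hF]
      simp only [hcu, nsmul_eq_mul, Polynomial.C_mul, map_natCast]
      ring
    rw [Finset.sum_congr rfl this, ← Finset.sum_mul, ← map_sum Polynomial.C, ← Finset.mul_sum, esymm]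
  rw [Finset.sum_congr rfl hinner]
  rw [← Finset.sum_range_reflect]
  refine Finset.sum_congr rfl fun i hi => ?_
  simp only [Finset.mem_range] at hi
  have h1 : p + 1 - 1 - i = p - i := by omega
  have h2 : e - (p - i) = e - p + i := by omega
  have h3 : p - (p - i) = i := by omega
  rw [h1, h2, h3]

/-- for integers `e ≥ p ≥ 0` one has, in `ℝ[x₁,…,x_e,t]`, the identity
`c_p(x₁+t,…,x_e+t) = Σ_{i=0}^{p} C(e−p+i, i) c_{p−i}(x₁,…,x_e) tⁱ`; equivalently, the
`i`-th derived Schur polynomial of the partition `λ = (p)` in `e` variables is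
`s_{(p)}^{(i)} = C(e−p+i, i) · c_{p−i}`. -/
theorem derivedSchur_single_row (e p : ℕ) (hpe : p ≤ e) :
    (MvPolynomial.aeval (fun k : Fin e => Polynomial.C (MvPolynomial.X k) + Polynomial.X)
        (esymm (Fin e) ℝ p) =
      ∑ i ∈ Finset.range (p + 1),
        Polynomial.C ((((e - p + i).choose i : ℕ) : MvPolynomial (Fin e) ℝ) *
            esymm (Fin e) ℝ (p - i)) * Polynomial.X ^ i) ∧
    ∀ i : ℕ, i ≤ p →
      derivedSchur e 1 (fun _ => p) i =
        (((e - p + i).choose i : ℕ) : MvPolynomial (Fin e) ℝ) * esymm (Fin e) ℝ (p - i) := by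
  refine ⟨esymm_shift e p hpe, fun i hi => ?_⟩
  have hs : schur e 1 (fun _ => p) = esymm (Fin e) ℝ p := by
    rw [schur, Matrix.det_fin_one, Matrix.of_apply]
    norm_num [esymmZ]
  rw [derivedSchur, schurShift, hs, esymm_shift e p hpe]
  rw [Polynomial.finset_sum_coeff]
  have : ∀ j ∈ Finset.range (p + 1),
      (Polynomial.C ((((e - p + j).choose j : ℕ) : MvPolynomial (Fin e) ℝ) *
          esymm (Fin e) ℝ (p - j)) * Polynomial.X ^ j).coeff i
      = if j = i then (((e - p + j).choose j : ℕ) : MvPolynomial (Fin e) ℝ) *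
          esymm (Fin e) ℝ (p - j) else 0 := by
    intro j _
    rw [Polynomial.coeff_C_mul, Polynomial.coeff_X_pow]
    by_cases h : j = i
    · simp [h]
    · rw [if_neg (fun hh : i = j => h hh.symm), mul_zero, if_neg h]
  rw [Finset.sum_congr rfl this, Finset.sum_ite_eq' (Finset.range (p + 1))]
  simp [Nat.lt_succ_iff.mpr hi]
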